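/- Let $\Omega\subseteq\mathbb{R}^n$ be open and let $W:\Omega\to\mathbb{R}$ be continuous. Assume that $\int_\Omega\big(|\nabla\xi|^2 - W\,\xi^2\big)\,dx\ \ge\ 0$ for every $C^1$ function $\xi:\Omega\to\mathbb{R}$ with compact support contained in $\Omega$. Let $V\subseteq\Omega$ be open, let $c:V\to\mathbb{R}$ be twice continuously differentiable, and let $\eta:V\to\mathbb{R}$ be $C^1$ with compact support contained in $V$. Then $\int_{V} c\,\big(\Delta c + W\,c\big)\,\eta^2\,dx\ \le\ \int_{V} c^2\,|\nabla\eta|^2\,dx$. -/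

import Mathlib

open MeasureTheory RealInnerProductSpace Manifold

/-- The partial derivative `∂_{x_l} w`. -/
noncomputable def pd {n : ℕ} (l : Fin n) (w : EuclideanSpace ℝ (Fin n) → ℝ) :
    EuclideanSpace ℝ (Fin n) → ℝ :=
  fun x => fderiv ℝ w x (EuclideanSpace.single l 1)

/-- The Laplacian `Δw = ∑_l ∂²_{x_l x_l} w`. -/
noncomputable def lap {n : ℕ} (w : EuclideanSpace ℝ (Fin n) → ℝ) :
    EuclideanSpace ℝ (Fin n) → ℝ :=
  fun x => ∑ l : Fin n, pd l (pd l w) x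

lemma normsq_clm {n : ℕ} (A : EuclideanSpace ℝ (Fin n) →L[ℝ] ℝ) :
    ‖A‖ ^ 2 = ∑ l : Fin n, (A (EuclideanSpace.single l 1)) ^ 2 := by
  set a := (InnerProductSpace.toDual ℝ (EuclideanSpace ℝ (Fin n))).symm A with ha
  have hAv : ∀ v, A v = ⟪a, v⟫ := by
    intro v
    rw [ha, InnerProductSpace.toDual_symm_apply]
  have hnorm : ‖A‖ = ‖a‖ := by
    rw [ha]; exact ((InnerProductSpace.toDual ℝ _).symm.norm_map A).symm
  rw [hnorm]
  have : ∀ l, A (EuclideanSpace.single l 1) = a l := by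
    intro l
    rw [hAv, real_inner_comm, EuclideanSpace.inner_single_left]
    simp
  simp_rw [this]
  rw [EuclideanSpace.norm_eq]
  rw [Real.sq_sqrt (by positivity)]
  simp [sq_abs]

lemma pd_contDiff {n : ℕ} (l : Fin n) {C : EuclideanSpace ℝ (Fin n) → ℝ}
    (hC : ContDiff ℝ 2 C) : ContDiff ℝ 1 (pd l C) := by
  have h1 : ContDiff ℝ 1 (fderiv ℝ C) := hC.fderiv_right (m := 1) le_rfl
  exact (ContinuousLinearMap.apply ℝ ℝ (EuclideanSpace.single l 1)).contDiff.comp h1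

lemma pd_continuous {n : ℕ} (l : Fin n) {g : EuclideanSpace ℝ (Fin n) → ℝ}
    (hg : ContDiff ℝ 1 g) : Continuous (pd l g) :=
  (hg.continuous_fderiv one_ne_zero).clm_apply continuous_const

/-- continuity of `W * g` when `W` is continuous only on the open set `Ω` but `g` is supported
in `Ω`. -/
lemma contW {n : ℕ} {Ω : Set (EuclideanSpace ℝ (Fin n))} (hΩ : IsOpen Ω)
    {W : EuclideanSpace ℝ (Fin n) → ℝ} (hW : ContinuousOn W Ω)
    {g : EuclideanSpace ℝ (Fin n) → ℝ} (hg : Continuous g) (hgs : tsupport g ⊆ Ω) :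
    Continuous fun x => W x * g x := by
  rw [continuous_iff_continuousAt]; intro x
  by_cases hx : x ∈ Ω
  · exact (hW.continuousAt (hΩ.mem_nhds hx)).mul hg.continuousAt
  · have hx' : x ∉ tsupport g := fun h => hx (hgs h)
    have hev : (fun x => W x * g x) =ᶠ[nhds x] fun _ => 0 := by
      filter_upwards [(isClosed_tsupport g).isOpen_compl.mem_nhds hx'] with y hy
      simp [image_eq_zero_of_notMem_tsupport hy]
    exact continuousAt_const.congr hev.symm

/-- Key global lemma: the stability inequality for globally `C²` functions `C`. -/
lemma key {n : ℕ} (Ω : Set (EuclideanSpace ℝ (Fin n))) (hΩ : IsOpen Ω)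
    (W : EuclideanSpace ℝ (Fin n) → ℝ) (hW : ContinuousOn W Ω)
    (hstab : ∀ ξ : EuclideanSpace ℝ (Fin n) → ℝ, ContDiff ℝ 1 ξ → HasCompactSupport ξ →
      tsupport ξ ⊆ Ω → 0 ≤ ∫ x in Ω, (‖fderiv ℝ ξ x‖ ^ 2 - W x * ξ x ^ 2))
    (C : EuclideanSpace ℝ (Fin n) → ℝ) (hC : ContDiff ℝ 2 C)
    (η : EuclideanSpace ℝ (Fin n) → ℝ) (hη : ContDiff ℝ 1 η) (hηc : HasCompactSupport η)
    (hηΩ : tsupport η ⊆ Ω) :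
    ∫ x, C x * (lap C x + W x * C x) * η x ^ 2 ≤ ∫ x, C x ^ 2 * ‖fderiv ℝ η x‖ ^ 2 := by
  have hC1 : ContDiff ℝ 1 C := hC.of_le one_le_two
  set ξ : EuclideanSpace ℝ (Fin n) → ℝ := fun x => C x * η x with hξdef
  set f : EuclideanSpace ℝ (Fin n) → ℝ := fun x => ξ x * η x with hfdef
  have hξ : ContDiff ℝ 1 ξ := hC1.mul hη
  have hf1 : ContDiff ℝ 1 f := hξ.mul hη
  have hξc : HasCompactSupport ξ := hηc.mul_left
  have hfc : HasCompactSupport f := hηc.mul_left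
  -- vanishing off `tsupport η`
  have hη0 : ∀ x ∉ tsupport η, η x = 0 := fun x hx => image_eq_zero_of_notMem_tsupport hx
  have hξ0 : ∀ x ∉ tsupport η, ξ x = 0 := fun x hx => by simp [hξdef, hη0 x hx]
  have hf0 : ∀ x ∉ tsupport η, f x = 0 := fun x hx => by simp [hfdef, hη0 x hx]
  have hsξ : tsupport ξ ⊆ tsupport η :=
    closure_minimal (fun x hx => by
      by_contra hc
      exact hx (hξ0 x hc)) (isClosed_tsupport η)
  have hsf : tsupport f ⊆ tsupport η :=
    closure_minimal (fun x hx => by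
      by_contra hc
      exact hx (hf0 x hc)) (isClosed_tsupport η)
  have hdη0 : ∀ x ∉ tsupport η, fderiv ℝ η x = 0 := by
    intro x hx
    have : x ∉ Function.support (fderiv ℝ η) := fun h => hx (support_fderiv_subset ℝ h)
    exact Function.notMem_support.mp this
  have hdξ0 : ∀ x ∉ tsupport η, fderiv ℝ ξ x = 0 := by
    intro x hx
    have : x ∉ Function.support (fderiv ℝ ξ) := fun h => hx (hsξ (support_fderiv_subset ℝ h))
    exact Function.notMem_support.mp this
  have hdf0 : ∀ x ∉ tsupport η, fderiv ℝ f x = 0 := by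
    intro x hx
    have : x ∉ Function.support (fderiv ℝ f) := fun h => hx (hsf (support_fderiv_subset ℝ h))
    exact Function.notMem_support.mp this
  -- generic compact support / tsupport helpers
  have hcsη : ∀ g : EuclideanSpace ℝ (Fin n) → ℝ,
      (∀ x ∉ tsupport η, g x = 0) → HasCompactSupport g :=
    fun g h => HasCompactSupport.intro hηc h
  have htsη : ∀ g : EuclideanSpace ℝ (Fin n) → ℝ,
      (∀ x ∉ tsupport η, g x = 0) → tsupport g ⊆ tsupport η := by
    intro g h
    refine closure_minimal (fun x hx => ?_) (isClosed_tsupport η)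
    by_contra hc
    exact hx (h x hc)
  have intCS : ∀ g : EuclideanSpace ℝ (Fin n) → ℝ, Continuous g →
      (∀ x ∉ tsupport η, g x = 0) → Integrable g :=
    fun g hg h => hg.integrable_of_hasCompactSupport (hcsη g h)
  have hP1 : ∀ l, ContDiff ℝ 1 (pd l C) := fun l => pd_contDiff l hC
  -- derivative formulas
  have hdξ : ∀ (x) (l : Fin n), pd l ξ x = C x * pd l η x + η x * pd l C x := by
    intro x l
    have h := fderiv_fun_mul (𝕜 := ℝ) (x := x) (hC1.differentiable one_ne_zero x)
      (hη.differentiable one_ne_zero x)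
    simp only [pd, hξdef, h, ContinuousLinearMap.add_apply, ContinuousLinearMap.coe_smul',
      Pi.smul_apply, smul_eq_mul]
  have hdf : ∀ (x) (l : Fin n), pd l f x = ξ x * pd l η x + η x * pd l ξ x := by
    intro x l
    have h := fderiv_fun_mul (𝕜 := ℝ) (x := x) (hξ.differentiable one_ne_zero x)
      (hη.differentiable one_ne_zero x)
    simp only [pd, hfdef, h, ContinuousLinearMap.add_apply, ContinuousLinearMap.coe_smul',
      Pi.smul_apply, smul_eq_mul]
  -- pointwise algebraic identity
  have hsq : ∀ (l : Fin n) (x), (pd l ξ x) ^ 2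
      = pd l f x * pd l C x + C x ^ 2 * (pd l η x) ^ 2 := by
    intro l x
    rw [hdf x l, hdξ x l]
    simp only [hξdef]
    ring
  -- norm expansions
  have hnξ : ∀ x, ‖fderiv ℝ ξ x‖ ^ 2 = ∑ l : Fin n, (pd l ξ x) ^ 2 :=
    fun x => normsq_clm (fderiv ℝ ξ x)
  have hnη : ∀ x, ‖fderiv ℝ η x‖ ^ 2 = ∑ l : Fin n, (pd l η x) ^ 2 :=
    fun x => normsq_clm (fderiv ℝ η x)
  -- integrability of all players
  have contlap : Continuous (lap C) := by
    apply continuous_finset_sum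
    exact fun l _ => pd_continuous l (hP1 l)
  have ilapf : Integrable (fun x => f x * lap C x) :=
    intCS _ (hf1.continuous.mul contlap) (fun x hx => by simp [hf0 x hx])
  have iB : ∀ l : Fin n, Integrable (fun x => f x * pd l (pd l C) x) :=
    fun l => intCS _ (hf1.continuous.mul (pd_continuous l (hP1 l)))
      (fun x hx => by simp [hf0 x hx])
  have iA : ∀ l : Fin n, Integrable (fun x => pd l f x * pd l C x) := by
    intro l
    refine intCS _ ((pd_continuous l hf1).mul (hP1 l).continuous) (fun x hx => ?_)
    simp [pd, hdf0 x hx]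
  have iC2Q : ∀ l : Fin n, Integrable (fun x => C x ^ 2 * (pd l η x) ^ 2) := by
    intro l
    refine intCS _ ((hC.continuous.pow 2).mul ((pd_continuous l hη).pow 2)) (fun x hx => ?_)
    simp [pd, hdη0 x hx]
  have iPdξsq : ∀ l : Fin n, Integrable (fun x => (pd l ξ x) ^ 2) := by
    intro l
    refine intCS _ ((pd_continuous l hξ).pow 2) (fun x hx => ?_)
    simp [pd, hdξ0 x hx]
  have iG2 : Integrable (fun x => C x ^ 2 * ‖fderiv ℝ η x‖ ^ 2) := by
    refine intCS _ ((hC.continuous.pow 2).mul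
      (((hη.continuous_fderiv one_ne_zero).norm).pow 2)) (fun x hx => ?_)
    simp [hdη0 x hx]
  have inormξ : Integrable (fun x => ‖fderiv ℝ ξ x‖ ^ 2) := by
    refine intCS _ (((hξ.continuous_fderiv one_ne_zero).norm).pow 2) (fun x hx => ?_)
    simp [hdξ0 x hx]
  have iWξ : Integrable (fun x => W x * ξ x ^ 2) := by
    refine intCS _ (contW hΩ hW (hξ.continuous.pow 2) ?_) (fun x hx => by simp [hξ0 x hx])
    exact (htsη _ (fun x hx => by simp [hξ0 x hx])).trans hηΩ
  -- integration by parts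
  have hIBP : ∀ l : Fin n, ∫ x, f x * pd l (pd l C) x = - ∫ x, pd l f x * pd l C x := by
    intro l
    exact integral_mul_fderiv_eq_neg_fderiv_mul_of_integrable (iA l) (iB l)
      (intCS _ (hf1.continuous.mul (hP1 l).continuous) (fun x hx => by simp [hf0 x hx]))
      (fun x _ => hf1.differentiable one_ne_zero x) (fun x _ => (hP1 l).differentiable one_ne_zero x)
  -- ∫ ‖∇ξ‖² = -∫ f lap C + ∫ C² ‖∇η‖²
  have hEA : ∫ x, ‖fderiv ℝ ξ x‖ ^ 2
      = (- ∫ x, f x * lap C x) + ∫ x, C x ^ 2 * ‖fderiv ℝ η x‖ ^ 2 := by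
    have e1 : ∫ x, ‖fderiv ℝ ξ x‖ ^ 2 = ∑ l : Fin n, ∫ x, (pd l ξ x) ^ 2 := by
      rw [show (fun x => ‖fderiv ℝ ξ x‖ ^ 2) = fun x => ∑ l : Fin n, (pd l ξ x) ^ 2 from
        funext hnξ]
      exact integral_finset_sum _ (fun l _ => iPdξsq l)
    have e2 : ∀ l : Fin n, ∫ x, (pd l ξ x) ^ 2
        = (∫ x, pd l f x * pd l C x) + ∫ x, C x ^ 2 * (pd l η x) ^ 2 := by
      intro l
      rw [show (fun x => (pd l ξ x) ^ 2)
        = fun x => pd l f x * pd l C x + C x ^ 2 * (pd l η x) ^ 2 from funext (hsq l)]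
      exact integral_add (iA l) (iC2Q l)
    have e3 : ∑ l : Fin n, ∫ x, pd l f x * pd l C x = - ∫ x, f x * lap C x := by
      have : ∀ l : Fin n, ∫ x, pd l f x * pd l C x = - ∫ x, f x * pd l (pd l C) x := by
        intro l
        rw [hIBP l, neg_neg]
      rw [Finset.sum_congr rfl (fun l _ => this l), Finset.sum_neg_distrib,
        ← integral_finset_sum _ (fun l _ => iB l)]
      rw [show (fun x => ∑ l : Fin n, f x * pd l (pd l C) x) = fun x => f x * lap C x from
        funext fun x => by simp [lap, Finset.mul_sum]]
    have e4 : ∑ l : Fin n, ∫ x, C x ^ 2 * (pd l η x) ^ 2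
        = ∫ x, C x ^ 2 * ‖fderiv ℝ η x‖ ^ 2 := by
      rw [← integral_finset_sum _ (fun l _ => iC2Q l)]
      rw [show (fun x => ∑ l : Fin n, C x ^ 2 * (pd l η x) ^ 2)
        = fun x => C x ^ 2 * ‖fderiv ℝ η x‖ ^ 2 from
        funext fun x => by rw [hnη x, Finset.mul_sum]]
    rw [e1, Finset.sum_congr rfl (fun l _ => e2 l), Finset.sum_add_distrib, e3, e4]
  -- the stability inequality for ξ
  have h0 := hstab ξ hξ hξc (hsξ.trans hηΩ)
  have hset : ∫ x in Ω, (‖fderiv ℝ ξ x‖ ^ 2 - W x * ξ x ^ 2)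
      = ∫ x, (‖fderiv ℝ ξ x‖ ^ 2 - W x * ξ x ^ 2) := by
    refine setIntegral_eq_integral_of_forall_compl_eq_zero (fun x hx => ?_)
    have hxη : x ∉ tsupport η := fun h => hx (hηΩ h)
    simp [hdξ0 x hxη, hξ0 x hxη]
  have hsplit : ∫ x, (‖fderiv ℝ ξ x‖ ^ 2 - W x * ξ x ^ 2)
      = (∫ x, ‖fderiv ℝ ξ x‖ ^ 2) - ∫ x, W x * ξ x ^ 2 := integral_sub inormξ iWξ
  -- rewrite the goal
  have hgoal : (fun x => C x * (lap C x + W x * C x) * η x ^ 2)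
      = fun x => f x * lap C x + W x * ξ x ^ 2 := by
    funext x
    simp only [hfdef, hξdef]
    ring
  rw [hgoal, integral_add ilapf iWξ]
  rw [hset, hsplit, hEA] at h0
  linarith

/-- Lemma 2.2 of the paper: if the quadratic form
`ξ ↦ ∫_Ω (|∇ξ|² − W ξ²)` is nonnegative on `C¹` functions compactly supported in `Ω`, then for
every open `V ⊆ Ω`, every `C²` function `c` on `V` and every `C¹` function `η` compactly
supported in `V`, `∫_V c (Δc + W c) η² ≤ ∫_V c² |∇η|²`. -/
theorem stability_inequality_test {n : ℕ} (Ω : Set (EuclideanSpace ℝ (Fin n))) (hΩ : IsOpen Ω)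
    (W : EuclideanSpace ℝ (Fin n) → ℝ) (hW : ContinuousOn W Ω)
    (hstab : ∀ ξ : EuclideanSpace ℝ (Fin n) → ℝ, ContDiff ℝ 1 ξ → HasCompactSupport ξ →
      tsupport ξ ⊆ Ω → 0 ≤ ∫ x in Ω, (‖fderiv ℝ ξ x‖ ^ 2 - W x * ξ x ^ 2))
    (V : Set (EuclideanSpace ℝ (Fin n))) (hV : IsOpen V) (hVΩ : V ⊆ Ω)
    (c : EuclideanSpace ℝ (Fin n) → ℝ) (hc : ContDiffOn ℝ 2 c V)
    (η : EuclideanSpace ℝ (Fin n) → ℝ) (hη : ContDiff ℝ 1 η) (hηc : HasCompactSupport η)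
    (hηV : tsupport η ⊆ V) :
    ∫ x in V, c x * (lap c x + W x * c x) * η x ^ 2 ≤ ∫ x in V, c x ^ 2 * ‖fderiv ℝ η x‖ ^ 2 := by
  -- a compact set `M` with `tsupport η ⊆ interior M` and `M ⊆ V`
  obtain ⟨M, hMc, hKM, hMV⟩ := exists_compact_between hηc hV hηV
  -- a smooth cutoff `χ`, equal to `1` near `tsupport η`, vanishing outside `M`
  obtain ⟨χ, hχ1, hχ0, -⟩ :=
    exists_contMDiffMap_one_nhds_of_subset_interior (n := 2) (𝓘(ℝ, EuclideanSpace ℝ (Fin n)))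
      (isClosed_tsupport η) hKM
  have hχC : ContDiff ℝ 2 (χ : EuclideanSpace ℝ (Fin n) → ℝ) := by
    have h := contMDiff_iff_contDiff.mp χ.contMDiff
    exact_mod_cast h
  obtain ⟨U, hUo, hKU, hU1⟩ := eventually_nhdsSet_iff_exists.mp hχ1
  set C : EuclideanSpace ℝ (Fin n) → ℝ := fun x => χ x * c x with hCdef
  have hCeqU : ∀ x ∈ U, C x = c x := fun x hx => by simp [hCdef, hU1 x hx]
  have hC2 : ContDiff ℝ 2 C := by
    rw [contDiff_iff_contDiffAt]
    intro x
    by_cases hx : x ∈ V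
    · exact hχC.contDiffAt.mul (hc.contDiffAt (hV.mem_nhds hx))
    · have hxM : x ∉ M := fun h => hx (hMV h)
      have hev : C =ᶠ[nhds x] fun _ => 0 := by
        filter_upwards [hMc.isClosed.isOpen_compl.mem_nhds hxM] with y hy
        simp [hCdef, hχ0 y hy]
      exact contDiffAt_const.congr_of_eventuallyEq hev
  have hpd : ∀ l : Fin n, ∀ y ∈ U, pd l C y = pd l c y := by
    intro l y hy
    have hev : C =ᶠ[nhds y] c := Filter.eventuallyEq_of_mem (hUo.mem_nhds hy) hCeqU
    simp only [pd]
    rw [hev.fderiv_eq]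
  have hppd : ∀ l : Fin n, ∀ y ∈ U, pd l (pd l C) y = pd l (pd l c) y := by
    intro l y hy
    have hev : pd l C =ᶠ[nhds y] pd l c := Filter.eventuallyEq_of_mem (hUo.mem_nhds hy) (hpd l)
    simp only [pd]
    rw [hev.fderiv_eq]
  have hlap : ∀ x ∈ U, lap C x = lap c x := by
    intro x hx
    simp only [lap]
    exact Finset.sum_congr rfl fun l _ => hppd l x hx
  have hη0 : ∀ x ∉ tsupport η, η x = 0 := fun x hx => image_eq_zero_of_notMem_tsupport hx
  have hdη0 : ∀ x ∉ tsupport η, fderiv ℝ η x = 0 := by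
    intro x hx
    have : x ∉ Function.support (fderiv ℝ η) := fun h => hx (support_fderiv_subset ℝ h)
    exact Function.notMem_support.mp this
  have hG1 : Set.EqOn (fun x => c x * (lap c x + W x * c x) * η x ^ 2)
      (fun x => C x * (lap C x + W x * C x) * η x ^ 2) V := by
    intro x _
    by_cases hxη : x ∈ tsupport η
    · have hxU : x ∈ U := hKU hxη
      simp only [hCeqU x hxU, hlap x hxU]
    · simp [hη0 x hxη]
  have hG2 : Set.EqOn (fun x => c x ^ 2 * ‖fderiv ℝ η x‖ ^ 2)
      (fun x => C x ^ 2 * ‖fderiv ℝ η x‖ ^ 2) V := by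
    intro x _
    by_cases hxη : x ∈ tsupport η
    · simp only [hCeqU x (hKU hxη)]
    · simp [hdη0 x hxη]
  rw [setIntegral_congr_fun hV.measurableSet hG1, setIntegral_congr_fun hV.measurableSet hG2]
  have e1 : ∫ x in V, C x * (lap C x + W x * C x) * η x ^ 2
      = ∫ x, C x * (lap C x + W x * C x) * η x ^ 2 := by
    refine setIntegral_eq_integral_of_forall_compl_eq_zero (fun x hx => ?_)
    have hxη : x ∉ tsupport η := fun h => hx (hηV h)
    simp [hη0 x hxη]
  have e2 : ∫ x in V, C x ^ 2 * ‖fderiv ℝ η x‖ ^ 2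
      = ∫ x, C x ^ 2 * ‖fderiv ℝ η x‖ ^ 2 := by
    refine setIntegral_eq_integral_of_forall_compl_eq_zero (fun x hx => ?_)
    have hxη : x ∉ tsupport η := fun h => hx (hηV h)
    simp [hdη0 x hxη]
  rw [e1, e2]
  exact key Ω hΩ W hW hstab C hC2 η hη hηc (hηV.trans hVΩ)
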